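/- Let n ≥ 1 and p ≥ 1 be integers and set m = min{n, p−1}. Let a ∈ ℂ^p be nonzero and let ξ₁, …, ξₙ ∈ ℂ^p. Define, for 1 ≤ k, l ≤ n, H_{kl} := ⟨ξ_k, ξ_l⟩/‖a‖² − ⟨ξ_k, a⟩⟨a, ξ_l⟩/‖a‖⁴, and, for 1 ≤ j ≤ p and 1 ≤ k ≤ n, c_{jk} := ξ_k(j)/‖a‖² − a_j⟨ξ_k, a⟩/‖a‖⁴, where ⟨x, y⟩ = Σ_{i=1}^p x_i · conj(y_i) is the standard Hermitian inner product on ℂ^p and ‖a‖² = ⟨a,a⟩. Then for every matrix v = (v_{jk}) ∈ ℂ^{p×n} one has m · Σ_{j=1}^p Σ_{k,l=1}^n H_{kl} v_{jk} conj(v_{jl}) ≥ ‖a‖² · |Σ_{j=1}^p Σ_{k=1}^n c_{jk} v_{jk}|². -/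

import Mathlib

set_option maxHeartbeats 1000000
open Finset Complex

lemma skoda_key {p m : ℕ} (V : Submodule ℂ (EuclideanSpace ℂ (Fin p)))
    (hV : Module.finrank ℂ V ≤ m) (w : Fin p → EuclideanSpace ℂ (Fin p))
    (hw : ∀ j, w j ∈ V) :
    ‖(∑ j, w j j)‖ ^ 2 ≤ (m : ℝ) * ∑ j, ‖w j‖ ^ 2 := by
  classical
  haveI : FiniteDimensional ℂ V := FiniteDimensional.finiteDimensional_submodule V
  set d := Module.finrank ℂ V with hd
  set e := stdOrthonormalBasis ℂ V with he
  set s : Fin d → ℂ := fun t =>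
    ∑ j, (inner ℂ ((e t : V) : EuclideanSpace ℂ (Fin p)) (w j) : ℂ) * ((e t : V) : EuclideanSpace ℂ (Fin p)) j with hs
  have hrepr : ∀ j, w j j = ∑ t, (inner ℂ ((e t : V) : EuclideanSpace ℂ (Fin p)) (w j) : ℂ) * ((e t : V) : EuclideanSpace ℂ (Fin p)) j := by
    intro j
    have h1 : ((∑ t, e.repr ⟨w j, hw j⟩ t • e t : V) : EuclideanSpace ℂ (Fin p)) = w j := by
      rw [e.sum_repr ⟨w j, hw j⟩]
    have h2 := congrFun (congrArg (fun (x : EuclideanSpace ℂ (Fin p)) => (x : Fin p → ℂ)) h1) j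
    simp only [] at h2
    rw [← h2]
    push_cast [Submodule.coe_sum]
    rw [WithLp.ofLp_sum, Finset.sum_apply]
    refine Finset.sum_congr rfl fun t _ => ?_
    rw [e.repr_apply_apply, Submodule.coe_inner]
    rfl
  have hT : ∑ j, w j j = ∑ t, s t := by
    rw [Finset.sum_congr rfl fun j _ => hrepr j, Finset.sum_comm]
  -- inner products as repr coordinates
  have hinner : ∀ t j, (inner ℂ ((e t : V) : EuclideanSpace ℂ (Fin p)) (w j) : ℂ)
      = e.repr ⟨w j, hw j⟩ t := by
    intro t j
    rw [e.repr_apply_apply, Submodule.coe_inner]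
  -- Step D: Parseval
  have hPar : ∀ j, ∑ t, ‖(inner ℂ ((e t : V) : EuclideanSpace ℂ (Fin p)) (w j) : ℂ)‖ ^ 2
      = ‖w j‖ ^ 2 := by
    intro j
    have h1 : ∀ t, ‖(inner ℂ ((e t : V) : EuclideanSpace ℂ (Fin p)) (w j) : ℂ)‖ ^ 2
        = ‖e.repr ⟨w j, hw j⟩ t‖ ^ 2 := by intro t; rw [hinner]
    rw [Finset.sum_congr rfl fun t _ => h1 t]
    have h2 : ‖e.repr ⟨w j, hw j⟩‖ = ‖(⟨w j, hw j⟩ : V)‖ := e.repr.norm_map _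
    have h3 : ‖(⟨w j, hw j⟩ : V)‖ = ‖w j‖ := rfl
    have h4 := EuclideanSpace.norm_eq (e.repr ⟨w j, hw j⟩)
    have h5 : ∑ t, ‖e.repr ⟨w j, hw j⟩ t‖ ^ 2 = ‖e.repr ⟨w j, hw j⟩‖ ^ 2 := by
      rw [h4, Real.sq_sqrt (Finset.sum_nonneg fun t _ => sq_nonneg _)]
    rw [h5, h2, h3]
  -- Step C: Cauchy–Schwarz for each t
  have hCS : ∀ t, ‖(s t)‖ ^ 2
      ≤ ∑ j, ‖(inner ℂ ((e t : V) : EuclideanSpace ℂ (Fin p)) (w j) : ℂ)‖ ^ 2 := by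
    intro t
    set x : EuclideanSpace ℂ (Fin p) := (WithLp.equiv 2 (Fin p → ℂ)).symm
      (fun j => starRingEnd ℂ (inner ℂ ((e t : V) : EuclideanSpace ℂ (Fin p)) (w j))) with hx
    have hip : (inner ℂ x ((e t : V) : EuclideanSpace ℂ (Fin p)) : ℂ) = s t := by
      rw [PiLp.inner_apply, hs]
      refine Finset.sum_congr rfl fun j _ => ?_
      simp [hx, mul_comm]
    have hnet : ‖((e t : V) : EuclideanSpace ℂ (Fin p))‖ = 1 := by
      rw [Submodule.norm_coe]
      exact e.orthonormal.1 t
    have hb := norm_inner_le_norm (𝕜 := ℂ) x ((e t : V) : EuclideanSpace ℂ (Fin p))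
    rw [hip, hnet, mul_one] at hb
    have hxn : ‖x‖ ^ 2 = ∑ j, ‖(inner ℂ ((e t : V) : EuclideanSpace ℂ (Fin p)) (w j) : ℂ)‖ ^ 2 := by
      rw [EuclideanSpace.norm_eq, Real.sq_sqrt (Finset.sum_nonneg fun j _ => sq_nonneg _)]
      refine Finset.sum_congr rfl fun j _ => ?_
      simp only [hx]
      rw [WithLp.equiv_symm_apply, PiLp.toLp_apply]
      simp only [PiLp.inner_apply, RCLike.inner_apply]
      rw [← Complex.norm_conj]
      norm_num [map_sum]
    calc ‖(s t)‖ ^ 2 = ‖s t‖ ^ 2 := rfl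
      _ ≤ ‖x‖ ^ 2 := by
          apply pow_le_pow_left₀ (norm_nonneg _) hb
      _ = _ := hxn
  -- Step B and conclusion
  have hB : ‖(∑ t, s t)‖ ^ 2 ≤ (d : ℝ) * ∑ t, ‖(s t)‖ ^ 2 := by
    have h1 : ‖(∑ t, s t)‖ ≤ ∑ t, ‖(s t)‖ := norm_sum_le _ _
    have h2 : (∑ t, ‖(s t)‖) ^ 2 ≤ (Finset.univ.card : ℝ) * ∑ t, ‖(s t)‖ ^ 2 :=
      sq_sum_le_card_mul_sum_sq
    calc ‖(∑ t, s t)‖ ^ 2 ≤ (∑ t, ‖(s t)‖) ^ 2 :=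
          pow_le_pow_left₀ (norm_nonneg _) h1 2
      _ ≤ (Finset.univ.card : ℝ) * ∑ t, ‖(s t)‖ ^ 2 := h2
      _ = (d : ℝ) * ∑ t, ‖(s t)‖ ^ 2 := by rw [Finset.card_univ, Fintype.card_fin]
  have hsum : ∑ t, ‖(s t)‖ ^ 2 ≤ ∑ j, ‖w j‖ ^ 2 := by
    calc ∑ t, ‖(s t)‖ ^ 2
        ≤ ∑ t, ∑ j, ‖(inner ℂ ((e t : V) : EuclideanSpace ℂ (Fin p)) (w j) : ℂ)‖ ^ 2 :=
          Finset.sum_le_sum fun t _ => hCS t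
      _ = ∑ j, ∑ t, ‖(inner ℂ ((e t : V) : EuclideanSpace ℂ (Fin p)) (w j) : ℂ)‖ ^ 2 :=
          Finset.sum_comm
      _ = ∑ j, ‖w j‖ ^ 2 := Finset.sum_congr rfl fun j _ => hPar j
  have hwnn : (0:ℝ) ≤ ∑ j, ‖w j‖ ^ 2 := Finset.sum_nonneg fun j _ => sq_nonneg _
  calc ‖(∑ j, w j j)‖ ^ 2 = ‖(∑ t, s t)‖ ^ 2 := by rw [hT]
    _ ≤ (d : ℝ) * ∑ t, ‖(s t)‖ ^ 2 := hB
    _ ≤ (d : ℝ) * ∑ j, ‖w j‖ ^ 2 := by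
        apply mul_le_mul_of_nonneg_left hsum (Nat.cast_nonneg d)
    _ ≤ (m : ℝ) * ∑ j, ‖w j‖ ^ 2 := by
        apply mul_le_mul_of_nonneg_right _ hwnn
        exact_mod_cast hV


lemma skoda_main_aux
    (n p : ℕ) (hn : 1 ≤ n) (hp : 1 ≤ p)
    (a : Fin p → ℂ) (ha : a ≠ 0) (ξ : Fin n → Fin p → ℂ) (v : Fin p → Fin n → ℂ) :
    (∑ i, a i * starRingEnd ℂ (a i)).re *
      ‖(∑ j, ∑ k,
        (ξ k j / (∑ i, a i * starRingEnd ℂ (a i))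
          - a j * (∑ i, ξ k i * starRingEnd ℂ (a i)) / (∑ i, a i * starRingEnd ℂ (a i)) ^ 2)
        * v j k)‖ ^ 2 ≤
    ((min n (p-1) : ℕ) : ℝ) *
      (∑ j, ∑ k, ∑ l,
        ((∑ i, ξ k i * starRingEnd ℂ (ξ l i)) / (∑ i, a i * starRingEnd ℂ (a i))
          - (∑ i, ξ k i * starRingEnd ℂ (a i)) * (∑ i, a i * starRingEnd ℂ (ξ l i))
            / (∑ i, a i * starRingEnd ℂ (a i)) ^ 2)
        * v j k * starRingEnd ℂ (v j l)).re := by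
  classical
  set Q : ℂ := ∑ i, a i * starRingEnd ℂ (a i) with hQdef
  set r : ℝ := ∑ i, Complex.normSq (a i) with hrdef
  have hQ : Q = (r : ℂ) := by
    rw [hQdef, hrdef]
    push_cast
    exact Finset.sum_congr rfl fun i _ => (Complex.mul_conj (a i))
  have hr : 0 < r := by
    obtain ⟨i, hai⟩ := Function.ne_iff.mp ha
    exact Finset.sum_pos' (fun i _ => Complex.normSq_nonneg _)
      ⟨i, Finset.mem_univ i, by simpa [Complex.normSq_pos] using hai⟩
  have hQ0 : Q ≠ 0 := by rw [hQ]; exact_mod_cast hr.ne'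
  have hconjQ : starRingEnd ℂ Q = Q := by rw [hQ, Complex.conj_ofReal]
  set α : Fin n → ℂ := fun k => ∑ i, ξ k i * starRingEnd ℂ (a i) with hα
  set b : Fin n → Fin p → ℂ := fun k j => ξ k j - a j * α k / Q with hbdef
  set w : Fin p → Fin p → ℂ := fun j i => ∑ k, v j k * b k i with hwdef
  set wE : Fin p → EuclideanSpace ℂ (Fin p) :=
    fun j => (WithLp.equiv 2 (Fin p → ℂ)).symm (w j) with hwE
  set bE : Fin n → EuclideanSpace ℂ (Fin p) :=
    fun k => (WithLp.equiv 2 (Fin p → ℂ)).symm (b k) with hbE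
  -- conj α
  have h3 : ∀ l, ∑ i, a i * starRingEnd ℂ (ξ l i) = starRingEnd ℂ (α l) := by
    intro l
    rw [hα]
    simp only [map_sum, map_mul, Complex.conj_conj]
    exact Finset.sum_congr rfl fun i _ => (mul_comm _ _)
  -- c rewrite
  have hc : ∀ j, ∑ k, (ξ k j / Q - a j * (∑ i, ξ k i * starRingEnd ℂ (a i)) / Q ^ 2) * v j k
      = w j j / Q := by
    intro j
    rw [hwdef]
    simp only []
    rw [Finset.sum_div]
    refine Finset.sum_congr rfl fun k _ => ?_
    rw [hbdef]
    field_simp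
    ring
  -- inner products of b's
  have hb : ∀ k l, ∑ i, b k i * starRingEnd ℂ (b l i)
      = (∑ i, ξ k i * starRingEnd ℂ (ξ l i)) - α k * starRingEnd ℂ (α l) / Q := by
    intro k l
    have hexp : ∀ i, b k i * starRingEnd ℂ (b l i)
        = ξ k i * starRingEnd ℂ (ξ l i)
          - (ξ k i * starRingEnd ℂ (a i)) * (starRingEnd ℂ (α l) / Q)
          - (a i * starRingEnd ℂ (ξ l i)) * (α k / Q)
          + (a i * starRingEnd ℂ (a i)) * (α k * starRingEnd ℂ (α l) / Q ^ 2) := by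
      intro i
      rw [hbdef]
      simp only [map_sub, map_mul, map_div₀, hconjQ]
      field_simp
      ring
    rw [Finset.sum_congr rfl fun i _ => hexp i]
    rw [Finset.sum_add_distrib, Finset.sum_sub_distrib, Finset.sum_sub_distrib,
      ← Finset.sum_mul, ← Finset.sum_mul, ← Finset.sum_mul]
    rw [h3 l, show (∑ i, ξ k i * starRingEnd ℂ (a i)) = α k from rfl,
      show (∑ i, a i * starRingEnd ℂ (a i)) = Q from rfl]
    field_simp
    ring
  -- expanding the quadratic form
  have hw2 : ∀ j, ∑ i, w j i * starRingEnd ℂ (w j i)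
      = ∑ k, ∑ l, (v j k * starRingEnd ℂ (v j l)) * ∑ i, b k i * starRingEnd ℂ (b l i) := by
    intro j
    calc ∑ i, w j i * starRingEnd ℂ (w j i)
        = ∑ i, ∑ k, ∑ l, (v j k * b k i) * (starRingEnd ℂ (v j l) * starRingEnd ℂ (b l i)) := by
          refine Finset.sum_congr rfl fun i _ => ?_
          rw [hwdef]
          simp only [map_sum, map_mul]
          rw [Finset.sum_mul_sum]
      _ = ∑ k, ∑ i, ∑ l, (v j k * b k i) * (starRingEnd ℂ (v j l) * starRingEnd ℂ (b l i)) :=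
          Finset.sum_comm
      _ = ∑ k, ∑ l, ∑ i, (v j k * b k i) * (starRingEnd ℂ (v j l) * starRingEnd ℂ (b l i)) :=
          Finset.sum_congr rfl fun k _ => Finset.sum_comm
      _ = ∑ k, ∑ l, (v j k * starRingEnd ℂ (v j l)) * ∑ i, b k i * starRingEnd ℂ (b l i) := by
          refine Finset.sum_congr rfl fun k _ => Finset.sum_congr rfl fun l _ => ?_
          rw [Finset.mul_sum]
          exact Finset.sum_congr rfl fun i _ => by ring
  -- H sums
  have hHsum : ∀ j, ∑ k, ∑ l,
      ((∑ i, ξ k i * starRingEnd ℂ (ξ l i)) / Q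
        - (∑ i, ξ k i * starRingEnd ℂ (a i)) * (∑ i, a i * starRingEnd ℂ (ξ l i)) / Q ^ 2)
        * v j k * starRingEnd ℂ (v j l)
      = (∑ i, w j i * starRingEnd ℂ (w j i)) / Q := by
    intro j
    rw [hw2 j, Finset.sum_div]
    refine Finset.sum_congr rfl fun k _ => ?_
    rw [Finset.sum_div]
    refine Finset.sum_congr rfl fun l _ => ?_
    rw [hb k l, h3 l]
    field_simp
    ring
  -- norms
  have hnorm : ∀ j, ∑ i, w j i * starRingEnd ℂ (w j i) = ((‖wE j‖ ^ 2 : ℝ) : ℂ) := by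
    intro j
    rw [Finset.sum_congr rfl fun i _ => (Complex.mul_conj (w j i))]
    rw [← Complex.ofReal_sum]
    congr 1
    rw [EuclideanSpace.norm_eq, Real.sq_sqrt (Finset.sum_nonneg fun i _ => sq_nonneg _)]
    refine Finset.sum_congr rfl fun i _ => ?_
    rw [hwE]
    simp only [WithLp.equiv_symm_apply, PiLp.toLp_apply]
    rw [Complex.normSq_eq_norm_sq]
  -- span and rank
  set V : Submodule ℂ (EuclideanSpace ℂ (Fin p)) := Submodule.span ℂ (Set.range bE) with hVdef
  have hwV : ∀ j, wE j ∈ V := by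
    intro j
    have heq : wE j = ∑ k, v j k • bE k := by
      ext i
      rw [hwE]
      simp only [WithLp.equiv_symm_apply, PiLp.toLp_apply, hwdef]
      rw [WithLp.ofLp_sum, Finset.sum_apply]
      refine Finset.sum_congr rfl fun k _ => ?_
      rw [WithLp.ofLp_smul, Pi.smul_apply]
      rw [hbE]
      simp [WithLp.equiv_symm_apply, smul_eq_mul]
    rw [heq]
    exact Submodule.sum_mem _ fun k _ =>
      Submodule.smul_mem _ _ (Submodule.subset_span ⟨k, rfl⟩)
  have hrank1 : Module.finrank ℂ V ≤ n := by
    have h := finrank_range_le_card (R := ℂ) bE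
    simpa [Set.finrank, hVdef] using h
  set aE : EuclideanSpace ℂ (Fin p) := (WithLp.equiv 2 (Fin p → ℂ)).symm a with haEdef
  have haE : aE ≠ 0 := by
    intro h
    apply ha
    have h2 := congrArg (WithLp.equiv 2 (Fin p → ℂ)) h
    simpa [haEdef] using h2
  haveI : Fact (Module.finrank ℂ (EuclideanSpace ℂ (Fin p)) = (p - 1) + 1) :=
    ⟨by rw [finrank_euclideanSpace_fin]; omega⟩
  have hrank2 : Module.finrank ℂ V ≤ p - 1 := by
    have hb_perp : ∀ k, bE k ∈ (ℂ ∙ aE)ᗮ := by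
      intro k
      rw [Submodule.mem_orthogonal_singleton_iff_inner_right]
      rw [PiLp.inner_apply]
      have e1 : ∀ i, (inner ℂ (aE i) (bE k i) : ℂ)
          = starRingEnd ℂ (a i) * ξ k i - (starRingEnd ℂ (a i) * a i) * (α k / Q) := by
        intro i
        rw [haEdef, hbE]
        simp only [WithLp.equiv_symm_apply, PiLp.toLp_apply, RCLike.inner_apply, hbdef]
        simp only [starRingEnd_apply]
        ring
      rw [Finset.sum_congr rfl fun i _ => e1 i]
      rw [Finset.sum_sub_distrib, ← Finset.sum_mul]
      have e2 : ∑ i, starRingEnd ℂ (a i) * ξ k i = α k := by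
        rw [hα]; exact Finset.sum_congr rfl fun i _ => mul_comm _ _
      have e3 : ∑ i, starRingEnd ℂ (a i) * a i = Q := by
        rw [hQdef]; exact Finset.sum_congr rfl fun i _ => mul_comm _ _
      rw [e2, e3]
      field_simp
      ring
    have hle : V ≤ (ℂ ∙ aE)ᗮ :=
      Submodule.span_le.mpr (Set.range_subset_iff.mpr hb_perp)
    calc Module.finrank ℂ V ≤ Module.finrank ℂ ((ℂ ∙ aE)ᗮ : Submodule ℂ _) :=
          Submodule.finrank_mono hle
      _ = p - 1 := Submodule.finrank_orthogonal_span_singleton haE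
  have hkey := skoda_key V (le_min hrank1 hrank2) wE hwV
  have hcoord : ∀ j, wE j j = w j j := fun j => rfl
  rw [Finset.sum_congr rfl fun j (_ : j ∈ Finset.univ) => hcoord j] at hkey
  -- assembly
  have hLs : ∑ j, ∑ k,
      (ξ k j / Q - a j * (∑ i, ξ k i * starRingEnd ℂ (a i)) / Q ^ 2) * v j k
      = (∑ j, w j j) / Q := by
    rw [Finset.sum_div]
    exact Finset.sum_congr rfl fun j _ => hc j
  have hRs : ∑ j, ∑ k, ∑ l,
      ((∑ i, ξ k i * starRingEnd ℂ (ξ l i)) / Q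
        - (∑ i, ξ k i * starRingEnd ℂ (a i)) * (∑ i, a i * starRingEnd ℂ (ξ l i)) / Q ^ 2)
        * v j k * starRingEnd ℂ (v j l)
      = (((∑ j, ‖wE j‖ ^ 2 : ℝ)) : ℂ) / Q := by
    rw [Finset.sum_congr rfl fun j (_ : j ∈ Finset.univ) => hHsum j]
    rw [Finset.sum_congr rfl fun j (_ : j ∈ Finset.univ) => by rw [hnorm j]]
    rw [← Finset.sum_div, ← Complex.ofReal_sum]
  rw [hLs, hRs, hQ]
  rw [← Complex.ofReal_div, Complex.ofReal_re, Complex.ofReal_re]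
  rw [norm_div, Complex.norm_real, Real.norm_eq_abs, abs_of_pos hr]
  have hS : (0:ℝ) ≤ ∑ j, ‖wE j‖ ^ 2 := Finset.sum_nonneg fun j _ => sq_nonneg _
  have heq2 : r * (‖(∑ j, w j j)‖ / r) ^ 2
      = ‖(∑ j, w j j)‖ ^ 2 / r := by
    field_simp
  rw [heq2, ← mul_div_assoc]
  gcongr


/-- **Skoda's basic inequality, pointwise form.**
With `⟨x, y⟩ = ∑ i, x i * conj (y i)` the standard Hermitian product on `ℂ^p`,
`H k l = ⟨ξ k, ξ l⟩/‖a‖² − ⟨ξ k, a⟩⟨a, ξ l⟩/‖a‖⁴` and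
`c j k = (ξ k) j/‖a‖² − a j ⟨ξ k, a⟩/‖a‖⁴`, one has
`m ∑_{j,k,l} H k l * v j k * conj (v j l) ≥ ‖a‖² |∑_{j,k} c j k * v j k|²`
where `m = min n (p-1)`. -/
theorem skoda_basic_inequality_pointwise
    (n p : ℕ) (hn : 1 ≤ n) (hp : 1 ≤ p)
    (a : Fin p → ℂ) (ha : a ≠ 0) (ξ : Fin n → Fin p → ℂ) (v : Fin p → Fin n → ℂ) :
    let conj : ℂ → ℂ := starRingEnd ℂ
    let ip : (Fin p → ℂ) → (Fin p → ℂ) → ℂ := fun x y => ∑ i, x i * conj (y i)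
    let q : ℂ := ip a a
    let H : Fin n → Fin n → ℂ :=
      fun k l => ip (ξ k) (ξ l) / q - ip (ξ k) a * ip a (ξ l) / q ^ 2
    let c : Fin p → Fin n → ℂ :=
      fun j k => ξ k j / q - a j * ip (ξ k) a / q ^ 2
    let m : ℕ := min n (p - 1)
    q.re * ‖(∑ j, ∑ k, c j k * v j k)‖ ^ 2 ≤
      (m : ℝ) * (∑ j, ∑ k, ∑ l, H k l * v j k * conj (v j l)).re := by
  intro conj ip q H c m
  exact skoda_main_aux n p hn hp a ha ξ v
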